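/- In the Beltrami-Klein model with distance d(x,y) = arccosh((1 − ⟨x,y⟩)/(sqrt(1−|x|²) sqrt(1−|y|²))) on the open unit disk, Euclidean straight-line segments are geodesics: if z lies on the Euclidean segment between x and y, then d(x,z) + d(z,y) = d(x,y). -/

import Mathlib

/-- The inverse hyperbolic cosine. -/
noncomputable def arcosh (x : ℝ) : ℝ := Real.log (x + Real.sqrt (x ^ 2 - 1))




/-- The Cayley–Klein hyperbolic distance on the open unit disk. -/
noncomputable def kleinDist (x y : EuclideanSpace ℝ (Fin 2)) : ℝ :=
  arcosh ((1 - (inner ℝ x y : ℝ)) /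
    (Real.sqrt (1 - ‖x‖ ^ 2) * Real.sqrt (1 - ‖y‖ ^ 2)))

lemma arcosh_add {u v : ℝ} (hu : 1 ≤ u) (hv : 1 ≤ v) :
    arcosh u + arcosh v
      = arcosh (u * v + Real.sqrt (u ^ 2 - 1) * Real.sqrt (v ^ 2 - 1)) := by
  unfold arcosh
  set s := Real.sqrt (u ^ 2 - 1) with hs
  set t := Real.sqrt (v ^ 2 - 1) with htdef
  have hs0 : 0 ≤ s := Real.sqrt_nonneg _
  have ht0 : 0 ≤ t := Real.sqrt_nonneg _
  have hs2 : s ^ 2 = u ^ 2 - 1 := Real.sq_sqrt (by nlinarith)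
  have ht2 : t ^ 2 = v ^ 2 - 1 := Real.sq_sqrt (by nlinarith)
  have key : Real.sqrt ((u * v + s * t) ^ 2 - 1) = u * t + v * s := by
    rw [show (u * v + s * t) ^ 2 - 1 = (u * t + v * s) ^ 2 by
      linear_combination (t ^ 2 - v ^ 2) * hs2 - ht2]
    exact Real.sqrt_sq (by nlinarith)
  rw [key, ← Real.log_mul (by nlinarith) (by nlinarith)]
  congr 1
  ring

lemma convex_pos {t p r : ℝ} (ht0 : 0 ≤ t) (ht1 : t ≤ 1) (hp : 0 < p) (hr : 0 < r) :
    0 < (1 - t) * p + t * r := by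
  rcases ht1.lt_or_eq with h | h
  · have h1 : 0 < (1 - t) * p := mul_pos (by linarith) hp
    have h2 : 0 ≤ t * r := mul_nonneg ht0 hr.le
    linarith
  · subst h; simpa using hr

lemma klein_core {t p q r : ℝ} (ht0 : 0 ≤ t) (ht1 : t ≤ 1)
    (hp : 0 < p) (hq : 0 < q) (hr : 0 < r) (hD : 0 ≤ r ^ 2 - p * q) :
    arcosh (((1 - t) * p + t * r) /
        (Real.sqrt p * Real.sqrt ((1 - t) ^ 2 * p + 2 * (t * (1 - t)) * r + t ^ 2 * q)))
      + arcosh (((1 - t) * r + t * q) /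
        (Real.sqrt ((1 - t) ^ 2 * p + 2 * (t * (1 - t)) * r + t ^ 2 * q) * Real.sqrt q))
      = arcosh (r / (Real.sqrt p * Real.sqrt q)) := by
  set r1 := (1 - t) * p + t * r with hr1def
  set r2 := (1 - t) * r + t * q with hr2def
  set w := (1 - t) ^ 2 * p + 2 * (t * (1 - t)) * r + t ^ 2 * q with hwdef
  have hr1 : 0 < r1 := convex_pos ht0 ht1 hp hr
  have hr2 : 0 < r2 := convex_pos ht0 ht1 hr hq
  have hw : 0 < w := by
    have h := convex_pos ht0 ht1 hr1 hr2
    rw [hr1def, hr2def] at h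
    rw [hwdef]; nlinarith [h]
  set s1 := Real.sqrt p with hs1def
  set s2 := Real.sqrt q with hs2def
  set s3 := Real.sqrt w with hs3def
  set d := Real.sqrt (r ^ 2 - p * q) with hddef
  have hs1 : 0 < s1 := Real.sqrt_pos.2 hp
  have hs2 : 0 < s2 := Real.sqrt_pos.2 hq
  have hs3 : 0 < s3 := Real.sqrt_pos.2 hw
  have hd0 : 0 ≤ d := Real.sqrt_nonneg _
  have hs1sq : s1 ^ 2 = p := Real.sq_sqrt hp.le
  have hs2sq : s2 ^ 2 = q := Real.sq_sqrt hq.le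
  have hs3sq : s3 ^ 2 = w := Real.sq_sqrt hw.le
  have hdsq : d ^ 2 = r ^ 2 - p * q := Real.sq_sqrt hD
  clear_value s1 s2 s3 d
  have hA1 : 1 ≤ r1 / (s1 * s3) := by
    rw [le_div_iff₀ (by positivity)]
    nlinarith [mul_nonneg (sq_nonneg t) hD, sq_nonneg (s1 * s3 - r1),
      mul_pos (mul_pos hs1 hs3) hr1]
  have hB1 : 1 ≤ r2 / (s3 * s2) := by
    rw [le_div_iff₀ (by positivity)]
    nlinarith [mul_nonneg (sq_nonneg (1 - t)) hD, sq_nonneg (s3 * s2 - r2),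
      mul_pos (mul_pos hs3 hs2) hr2]
  rw [arcosh_add hA1 hB1]
  congr 1
  have h1t : 0 ≤ 1 - t := by linarith
  have eA : Real.sqrt ((r1 / (s1 * s3)) ^ 2 - 1) = t * d / (s1 * s3) := by
    rw [show (r1 / (s1 * s3)) ^ 2 - 1 = (t * d / (s1 * s3)) ^ 2 by
      field_simp
      linear_combination (-(t ^ 2)) * hdsq - s3 ^ 2 * hs1sq - p * hs3sq]
    exact Real.sqrt_sq (by positivity)
  have eB : Real.sqrt ((r2 / (s3 * s2)) ^ 2 - 1) = (1 - t) * d / (s3 * s2) := by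
    rw [show (r2 / (s3 * s2)) ^ 2 - 1 = ((1 - t) * d / (s3 * s2)) ^ 2 by
      field_simp
      linear_combination (-((1 - t) ^ 2)) * hdsq - s3 ^ 2 * hs2sq - q * hs3sq]
    exact Real.sqrt_sq (by positivity)
  rw [eA, eB]
  field_simp
  linear_combination (t * (1 - t)) * hdsq - r * hs3sq

/-- Euclidean segments are geodesics of the Beltrami–Klein model: if `z` lies on the
Euclidean segment between `x` and `y`, then `d(x,z) + d(z,y) = d(x,y)`. -/
theorem kleinDist_additive_on_segments (x y z : EuclideanSpace ℝ (Fin 2))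
    (hx : ‖x‖ < 1) (hy : ‖y‖ < 1)
    (hz : ∃ t : ℝ, t ∈ Set.Icc (0 : ℝ) 1 ∧ z = (1 - t) • x + t • y) :
    kleinDist x z + kleinDist z y = kleinDist x y := by
  obtain ⟨t, ⟨ht0, ht1⟩, rfl⟩ := hz
  have hx0 : 0 ≤ ‖x‖ := norm_nonneg x
  have hy0 : 0 ≤ ‖y‖ := norm_nonneg y
  have hcle : (inner ℝ x y : ℝ) ≤ ‖x‖ * ‖y‖ := real_inner_le_norm x y
  have hp : 0 < 1 - ‖x‖ ^ 2 := by nlinarith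
  have hq : 0 < 1 - ‖y‖ ^ 2 := by nlinarith
  have hr : 0 < 1 - (inner ℝ x y : ℝ) := by nlinarith
  have hD : 0 ≤ (1 - (inner ℝ x y : ℝ)) ^ 2 - (1 - ‖x‖ ^ 2) * (1 - ‖y‖ ^ 2) := by
    nlinarith [sq_nonneg (‖x‖ - ‖y‖), mul_nonneg hx0 hy0]
  have h1 : (1 : ℝ) - (inner ℝ x ((1 - t) • x + t • y) : ℝ)
      = (1 - t) * (1 - ‖x‖ ^ 2) + t * (1 - (inner ℝ x y : ℝ)) := by
    simp only [inner_add_right, real_inner_smul_right, real_inner_self_eq_norm_sq]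
    ring
  have h2 : (1 : ℝ) - (inner ℝ ((1 - t) • x + t • y) y : ℝ)
      = (1 - t) * (1 - (inner ℝ x y : ℝ)) + t * (1 - ‖y‖ ^ 2) := by
    simp only [inner_add_left, real_inner_smul_left, real_inner_self_eq_norm_sq]
    ring
  have h3 : (1 : ℝ) - ‖(1 - t) • x + t • y‖ ^ 2
      = (1 - t) ^ 2 * (1 - ‖x‖ ^ 2) + 2 * (t * (1 - t)) * (1 - (inner ℝ x y : ℝ))
        + t ^ 2 * (1 - ‖y‖ ^ 2) := by
    have : ‖(1 - t) • x + t • y‖ ^ 2 = (inner ℝ ((1 - t) • x + t • y) ((1 - t) • x + t • y) : ℝ) :=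
      (real_inner_self_eq_norm_sq _).symm
    rw [this]
    simp only [inner_add_left, inner_add_right, real_inner_smul_left, real_inner_smul_right,
      real_inner_comm y x]
    simp only [real_inner_self_eq_norm_sq]
    ring
  rw [kleinDist, kleinDist, kleinDist, h1, h2, h3]
  exact klein_core ht0 ht1 hp hq hr hD
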